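/- For every u ≥ 0 and every n ≥ 4u (n a positive integer), φ^n(u) ≤ φ^∞(u), and φ^n(u) → φ^∞(u) as n → ∞, where φ^n(u) = Σ_{k=0}^n (C(n,k) p^n(u)^k (1 - p^n(u))^{n-k})^2 with p^n(u) = (1 - sqrt(1 - 4u/n))/2, and φ^∞(u) = e^{-2u} · Σ_{k=0}^∞ (u^k/k!)^2. -/

import Mathlib

/-- `pⁿ(u) = (1 - √(1 - 4u/n))/2`, a root of `p(1-p) = u/n`. -/
noncomputable def pn (n : ℕ) (u : ℝ) : ℝ := (1 - Real.sqrt (1 - 4 * u / n)) / 2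

/-- `φⁿ(u) = Σ_{k=0}^n (C(n,k) pⁿ(u)ᵏ (1-pⁿ(u))ⁿ⁻ᵏ)²`. -/
noncomputable def phi (n : ℕ) (u : ℝ) : ℝ :=
  ∑ k ∈ Finset.range (n + 1),
    ((n.choose k : ℝ) * pn n u ^ k * (1 - pn n u) ^ (n - k)) ^ 2

/-- `φ^∞(u) = e^{-2u} Σ_k (u^k/k!)²`. -/
noncomputable def phiInf (u : ℝ) : ℝ :=
  Real.exp (-2 * u) * ∑' k : ℕ, (u ^ k / (Nat.factorial k : ℝ)) ^ 2


noncomputable def fterm (u : ℝ) (n k : ℕ) : ℝ :=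
  ((n.choose k : ℝ) * pn n u ^ k * (1 - pn n u) ^ (n - k)) ^ 2

open Finset Filter Topology

lemma geom_sum_ru (M : ℕ) (d : ℤ) (hd : d ≠ 0) (hdM : d.natAbs < M) :
    ∑ j ∈ Finset.range M, Complex.exp (2 * Real.pi * Complex.I * d / M) ^ j = 0 := by
  have hM0 : (0:ℕ) < M := lt_of_le_of_lt (Nat.zero_le _) hdM
  have hMC : (M:ℂ) ≠ 0 := Nat.cast_ne_zero.2 hM0.ne'
  set ζ := Complex.exp (2 * Real.pi * Complex.I * d / M) with hζ
  have hζM : ζ ^ M = 1 := by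
    rw [hζ, ← Complex.exp_nat_mul]
    have h1 : (M:ℂ) * (2 * Real.pi * Complex.I * d / M) = d * (2 * Real.pi * Complex.I) := by
      field_simp
    rw [h1]
    exact_mod_cast Complex.exp_int_mul_two_pi_mul_I d
  have hζ1 : ζ ≠ 1 := by
    intro h
    rw [hζ, Complex.exp_eq_one_iff] at h
    obtain ⟨k, hk⟩ := h
    have hπ : (Real.pi : ℂ) ≠ 0 := Complex.ofReal_ne_zero.2 Real.pi_ne_zero
    have hI : Complex.I ≠ 0 := Complex.I_ne_zero
    rw [div_eq_iff hMC] at hk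
    have hdk : (d : ℂ) = (k * M : ℤ) := by
      push_cast
      have h2 : (2 * (Real.pi:ℂ) * Complex.I) * (d:ℂ)
          = (2 * (Real.pi:ℂ) * Complex.I) * ((k:ℂ) * M) := by linear_combination hk
      exact mul_left_cancel₀ (by simp [hπ, hI]) h2
    have hdk' : d = k * M := by exact_mod_cast hdk
    have hdvd : (M:ℤ) ∣ d := Dvd.intro_left k hdk'.symm
    have : M ∣ d.natAbs := by simpa using Int.natAbs_dvd_natAbs.2 hdvd
    have := Nat.le_of_dvd (Int.natAbs_pos.2 hd) this
    omega
  have := geom_sum_eq hζ1 M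
  rw [this, hζM, sub_self, zero_div]

lemma innerExpSum (M a b : ℕ) (ha : a < M) (hb : b < M) :
    ∑ j ∈ Finset.range M, Complex.exp ((2*(Real.pi:ℂ)*j/M) * Complex.I) ^ a *
      Complex.exp (-(2*(Real.pi:ℂ)*j/M) * Complex.I) ^ b
      = if a = b then (M:ℂ) else 0 := by
  rcases eq_or_ne a b with rfl | hab
  · simp only [if_pos rfl]
    have : ∀ j ∈ Finset.range M, Complex.exp ((2*(Real.pi:ℂ)*j/M) * Complex.I) ^ a *
        Complex.exp (-(2*(Real.pi:ℂ)*j/M) * Complex.I) ^ a = 1 := by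
      intro j _
      rw [← mul_pow, ← Complex.exp_add]
      have : (2*(Real.pi:ℂ)*j/M) * Complex.I + (-(2*(Real.pi:ℂ)*j/M)) * Complex.I = 0 := by ring
      rw [this, Complex.exp_zero, one_pow]
    rw [Finset.sum_congr rfl this]
    simp
  · rw [if_neg hab]
    set d : ℤ := (a:ℤ) - b with hd
    have key : ∀ j ∈ Finset.range M, Complex.exp ((2*(Real.pi:ℂ)*j/M) * Complex.I) ^ a *
        Complex.exp (-(2*(Real.pi:ℂ)*j/M) * Complex.I) ^ b
        = Complex.exp (2 * Real.pi * Complex.I * (d:ℂ) / M) ^ j := by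
      intro j _
      rw [← Complex.exp_nat_mul, ← Complex.exp_nat_mul, ← Complex.exp_add, ← Complex.exp_nat_mul]
      congr 1
      rw [hd]
      push_cast
      ring
    rw [Finset.sum_congr rfl key]
    exact geom_sum_ru M d (by omega) (by omega)

lemma key_identity (p q : ℝ) (n M : ℕ) (hnM : n < M) :
    (M:ℝ) * ∑ k ∈ Finset.range (n+1), ((n.choose k : ℝ) * p^k * q^(n-k))^2
      = ∑ j ∈ Finset.range M, (q^2 + p^2 + 2*p*q*Real.cos (2*Real.pi*j/M))^n := by
  rw [← Complex.ofReal_inj]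
  push_cast
  set E : ℕ → ℂ := fun j => Complex.exp ((2*(Real.pi:ℂ)*j/M) * Complex.I) with hE
  set F : ℕ → ℂ := fun j => Complex.exp (-(2*(Real.pi:ℂ)*j/M) * Complex.I) with hF
  have hstep : ∀ j ∈ Finset.range M,
      ((q:ℂ)^2 + (p:ℂ)^2 + 2*p*q*Complex.cos (2*(Real.pi:ℂ)*j/M))^n
      = ∑ a ∈ Finset.range (n+1), ∑ b ∈ Finset.range (n+1),
          ((n.choose a : ℂ) * (n.choose b : ℂ) * (p:ℂ)^(a+b) * (q:ℂ)^((n-a)+(n-b)))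
            * (E j ^ a * F j ^ b) := by
    intro j _
    have hmul : E j * F j = 1 := by
      rw [hE, hF, ← Complex.exp_add]
      have : (2*(Real.pi:ℂ)*j/M) * Complex.I + (-(2*(Real.pi:ℂ)*j/M)) * Complex.I = 0 := by ring
      rw [this, Complex.exp_zero]
    have h2c : E j + F j = 2 * Complex.cos (2*(Real.pi:ℂ)*j/M) := (Complex.two_cos _).symm
    have hfac : ((q:ℂ)^2 + (p:ℂ)^2 + 2*p*q*Complex.cos (2*(Real.pi:ℂ)*j/M))
        = ((p:ℂ) * E j + q) * ((p:ℂ) * F j + q) := by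
      linear_combination (-(p:ℂ)*q)*h2c - (p:ℂ)^2*hmul
    rw [hfac, mul_pow, add_pow, add_pow, Finset.sum_mul_sum]
    refine Finset.sum_congr rfl fun a ha => Finset.sum_congr rfl fun b hb => ?_
    ring
  rw [Finset.sum_congr rfl hstep, Finset.sum_comm]
  have hswap : ∀ a ∈ Finset.range (n+1),
      ∑ j ∈ Finset.range M, ∑ b ∈ Finset.range (n+1),
          ((n.choose a : ℂ) * (n.choose b : ℂ) * (p:ℂ)^(a+b) * (q:ℂ)^((n-a)+(n-b)))
            * (E j ^ a * F j ^ b)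
      = (n.choose a : ℂ)^2 * (p:ℂ)^(a+a) * (q:ℂ)^((n-a)+(n-a)) * M := by
    intro a ha
    rw [Finset.sum_comm]
    have hb : ∀ b ∈ Finset.range (n+1),
        ∑ j ∈ Finset.range M,
          ((n.choose a : ℂ) * (n.choose b : ℂ) * (p:ℂ)^(a+b) * (q:ℂ)^((n-a)+(n-b)))
            * (E j ^ a * F j ^ b)
        = if a = b then ((n.choose a : ℂ) * (n.choose b : ℂ) * (p:ℂ)^(a+b) * (q:ℂ)^((n-a)+(n-b))) * M
          else 0 := by
      intro b hbm
      rw [← Finset.mul_sum, innerExpSum M a b (by simp at ha; omega) (by simp at hbm; omega)]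
      split <;> simp
    rw [Finset.sum_congr rfl hb]
    rw [Finset.sum_ite_eq (Finset.range (n+1)) a
      (fun b => ((n.choose a : ℂ) * (n.choose b : ℂ) * (p:ℂ)^(a+b) * (q:ℂ)^((n-a)+(n-b))) * M)]
    rw [if_pos ha]
    ring
  rw [Finset.sum_congr rfl hswap, Finset.mul_sum]
  refine Finset.sum_congr rfl fun a ha => ?_
  ring

section
variable {u : ℝ} {n : ℕ}

lemma pn_mul' (hu : 0 ≤ u) (hn : 0 < n) (h4 : 4*u ≤ n) :
    pn n u * (1 - pn n u) = u / n := by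
  have hn0 : (n:ℝ) ≠ 0 := Nat.cast_ne_zero.2 hn.ne'
  have hs0 : 0 ≤ 1 - 4*u/n := by
    rw [sub_nonneg, div_le_one (by positivity)]; exact h4
  have hsq : Real.sqrt (1 - 4*u/n) ^ 2 = 1 - 4*u/n := Real.sq_sqrt hs0
  have hr : (1 - Real.sqrt (1-4*u/n))/2 * (1 - (1 - Real.sqrt (1-4*u/n))/2)
      = (1 - (Real.sqrt (1-4*u/n))^2)/4 := by ring
  rw [pn, hr, hsq]
  field_simp
  ring

lemma pn_nonneg' (hu : 0 ≤ u) (hn : 0 < n) (h4 : 4*u ≤ n) : 0 ≤ pn n u := by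
  have hs0 : 0 ≤ 1 - 4*u/n := by
    rw [sub_nonneg, div_le_one (by positivity)]; exact h4
  have : Real.sqrt (1 - 4*u/n) ≤ 1 := by
    have h4n : 0 ≤ 4*u/n := div_nonneg (by linarith) (Nat.cast_nonneg n)
    have h := Real.sqrt_le_sqrt (show 1 - 4*u/n ≤ 1 by linarith)
    rwa [Real.sqrt_one] at h
  unfold pn; linarith

lemma pn_le_half' (hu : 0 ≤ u) : pn n u ≤ 1/2 := by
  have := Real.sqrt_nonneg (1 - 4*u/n)
  unfold pn; linarith

lemma phi_eq_discrete (hu : 0 ≤ u) (hn : 0 < n) (h4 : 4*u ≤ n) {M : ℕ} (hM : n < M) :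
    (M:ℝ) * phi n u
      = ∑ j ∈ Finset.range M, (1 - 2*(u/n)*(1 - Real.cos (2*Real.pi*j/M)))^n := by
  rw [phi, key_identity (pn n u) (1 - pn n u) n M hM]
  refine Finset.sum_congr rfl fun j _ => ?_
  have h1 := pn_mul' hu hn h4
  congr 1
  linear_combination (-2*(1 - Real.cos (2*Real.pi*j/M)))*h1
end

lemma pow_cmp {x : ℝ} (hx0 : 0 ≤ x) {n m : ℕ} (hn : 0 < n) (hnm : n ≤ m) (hxn : x ≤ n) :
    (1 - x/n)^n ≤ (1 - x/m)^m := by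
  have hm : 0 < m := lt_of_lt_of_le hn hnm
  have hn0 : (n:ℝ) ≠ 0 := Nat.cast_ne_zero.2 hn.ne'
  have hm0 : (m:ℝ) ≠ 0 := Nat.cast_ne_zero.2 hm.ne'
  have hxm : x ≤ m := hxn.trans (by exact_mod_cast Nat.cast_le.2 hnm)
  have h1n : (0:ℝ) ≤ 1 - x/n := by
    rw [sub_nonneg, div_le_one (by positivity)]; exact hxn
  have h1m : (0:ℝ) ≤ 1 - x/m := by
    rw [sub_nonneg, div_le_one (by positivity)]; exact hxm
  have hbern : 1 - x/n ≤ (1 - x/m) ^ ((m:ℝ)/n) := by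
    have hs : (-1:ℝ) ≤ -x/m := by
      rw [neg_div, neg_le_neg_iff, div_le_one (by positivity)]; exact hxm
    have hp : (1:ℝ) ≤ (m:ℝ)/n := by
      rw [le_div_iff₀ (by positivity), one_mul]; exact_mod_cast hnm
    have := one_add_mul_self_le_rpow_one_add hs hp
    have heq : 1 + (m:ℝ)/n * (-x/m) = 1 - x/n := by field_simp; ring
    have heq2 : (1:ℝ) + -x/m = 1 - x/m := by ring
    rw [heq, heq2] at this
    exact this
  calc (1 - x/n)^n ≤ ((1 - x/m) ^ ((m:ℝ)/n))^n :=
        pow_le_pow_left₀ h1n hbern n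
    _ = (1 - x/m)^m := by
        rw [← Real.rpow_natCast ((1 - x/m) ^ ((m:ℝ)/n)) n, ← Real.rpow_mul h1m]
        rw [div_mul_cancel₀ _ hn0, Real.rpow_natCast]

lemma phi_mono {u : ℝ} (hu : 0 ≤ u) {n m : ℕ} (hn : 0 < n) (h4 : 4*u ≤ n) (hnm : n ≤ m) :
    phi n u ≤ phi m u := by
  have hm : 0 < m := lt_of_lt_of_le hn hnm
  have h4m : 4*u ≤ m := h4.trans (by exact_mod_cast Nat.cast_le.2 hnm)
  set M := m + 1 with hM
  have hMn : n < M := by omega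
  have hMm : m < M := by omega
  have h1 := phi_eq_discrete hu hn h4 hMn
  have h2 := phi_eq_discrete hu hm h4m hMm
  have hM0 : (0:ℝ) < M := by positivity
  rw [← mul_le_mul_iff_right₀ hM0, h1, h2]
  refine Finset.sum_le_sum fun j _ => ?_
  have hc : Real.cos (2*Real.pi*j/M) ≤ 1 := Real.cos_le_one _
  have hc' : -1 ≤ Real.cos (2*Real.pi*j/M) := Real.neg_one_le_cos _
  set x := 2*u*(1 - Real.cos (2*Real.pi*j/M)) with hx
  have hx0 : 0 ≤ x := by rw [hx]; nlinarith
  have hxn : x ≤ n := by rw [hx]; nlinarith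
  have e1 : 1 - 2*(u/n)*(1 - Real.cos (2*Real.pi*j/M)) = 1 - x/n := by rw [hx]; ring
  have e2 : 1 - 2*(u/m)*(1 - Real.cos (2*Real.pi*j/M)) = 1 - x/m := by rw [hx]; ring
  rw [e1, e2]
  exact pow_cmp hx0 hn hnm hxn

lemma phi_eq_tsum (u : ℝ) (n : ℕ) : phi n u = ∑' k, fterm u n k := by
  rw [tsum_eq_sum (s := Finset.range (n+1)) ?_]
  · rfl
  · intro k hk
    have : n < k := by simpa using hk
    simp [fterm, Nat.choose_eq_zero_of_lt this]

lemma np_le {u : ℝ} {n : ℕ} (hu : 0 ≤ u) (hn : 0 < n) (h4 : 4*u ≤ n) :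
    (n:ℝ) * pn n u ≤ 2*u := by
  have h1 := pn_mul' hu hn h4
  have h2 := pn_le_half' (u := u) (n := n) hu
  have h3 := pn_nonneg' hu hn h4
  have hn0 : (0:ℝ) < n := by exact_mod_cast hn
  have : pn n u / 2 ≤ u / n := by nlinarith
  rw [div_le_div_iff₀ (by norm_num) hn0] at this
  nlinarith

lemma pn_pos {u : ℝ} {n : ℕ} (hu : 0 < u) (hn : 0 < n) (h4 : 4*u ≤ n) : 0 < pn n u := by
  have hn0 : (0:ℝ) < n := by exact_mod_cast hn
  have hs0 : 0 ≤ 1 - 4*u/n := by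
    rw [sub_nonneg, div_le_one hn0]; exact h4
  have hsq : Real.sqrt (1 - 4*u/n) ^ 2 = 1 - 4*u/n := Real.sq_sqrt hs0
  have hlt : Real.sqrt (1 - 4*u/n) < 1 := by
    nlinarith [Real.sqrt_nonneg (1 - 4*u/n), div_pos (by linarith : (0:ℝ) < 4*u) hn0]
  unfold pn; linarith

section conv
variable {u : ℝ}

lemma ev_n (hu : 0 ≤ u) : ∀ᶠ n : ℕ in atTop, 0 < n ∧ 4*u ≤ (n:ℝ) := by
  filter_upwards [eventually_gt_atTop 0,
    tendsto_natCast_atTop_atTop.eventually_ge_atTop (4*u)] with n h1 h2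
  exact ⟨h1, h2⟩

lemma sqrt_tendsto (u : ℝ) :
    Tendsto (fun n : ℕ => Real.sqrt (1 - 4*u/n)) atTop (𝓝 1) := by
  have hdiv : Tendsto (fun n : ℕ => 4*u/(n:ℝ)) atTop (𝓝 0) :=
    tendsto_const_nhds.div_atTop tendsto_natCast_atTop_atTop
  have h1 : Tendsto (fun n : ℕ => 1 - 4*u/(n:ℝ)) atTop (𝓝 1) := by
    simpa using tendsto_const_nhds.sub hdiv
  have := (Real.continuous_sqrt.tendsto 1).comp h1
  simpa [Function.comp_def] using this

lemma np_tendsto (hu : 0 ≤ u) :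
    Tendsto (fun n : ℕ => (n:ℝ) * pn n u) atTop (𝓝 u) := by
  have hsq := sqrt_tendsto u
  have hden : Tendsto (fun n : ℕ => 1 + Real.sqrt (1 - 4*u/n)) atTop (𝓝 2) := by
    have := hsq.const_add 1
    norm_num at this
    exact this
  have hrhs : Tendsto (fun n : ℕ => 2*u/(1 + Real.sqrt (1 - 4*u/n))) atTop (𝓝 u) := by
    have := (tendsto_const_nhds (x := (2*u : ℝ))).div hden (by norm_num : (2:ℝ) ≠ 0)
    have h2 : 2*u/2 = u := by ring
    rwa [h2] at this
  refine hrhs.congr' ?_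
  filter_upwards [ev_n hu] with n ⟨hn, h4⟩
  have hn0 : (0:ℝ) < n := by exact_mod_cast hn
  have hs0 : 0 ≤ 1 - 4*u/n := by rw [sub_nonneg, div_le_one hn0]; exact h4
  have hsq2 : Real.sqrt (1 - 4*u/n) ^ 2 = 1 - 4*u/n := Real.sq_sqrt hs0
  have hpos : 0 < 1 + Real.sqrt (1 - 4*u/n) := by
    have := Real.sqrt_nonneg (1 - 4*u/n); linarith
  rw [pn, div_eq_iff hpos.ne']
  have hcan : (n:ℝ) * (4*u/n) = 4*u := by field_simp
  linear_combination ((n:ℝ)/2) * hsq2 - (1/2) * hcan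

lemma p_tendsto (hu : 0 ≤ u) : Tendsto (fun n : ℕ => pn n u) atTop (𝓝 0) := by
  have hinv : Tendsto (fun n : ℕ => ((n:ℝ))⁻¹) atTop (𝓝 0) :=
    tendsto_inv_atTop_zero.comp tendsto_natCast_atTop_atTop
  have := (np_tendsto hu).mul hinv
  rw [mul_zero] at this
  refine this.congr' ?_
  filter_upwards [eventually_gt_atTop 0] with n hn
  have hn0 : (n:ℝ) ≠ 0 := by positivity
  field_simp

lemma q_tendsto (hu : 0 ≤ u) : Tendsto (fun n : ℕ => 1 - pn n u) atTop (𝓝 1) := by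
  have := (p_tendsto hu).const_sub 1
  simpa using this

lemma slope_log : Tendsto (fun t : ℝ => Real.log (1 - t) / t) (𝓝[≠] (0:ℝ)) (𝓝 (-1)) := by
  have h1 : HasDerivAt (fun t : ℝ => 1 - t) (-1) 0 := (hasDerivAt_id 0).const_sub 1
  have h2 : HasDerivAt Real.log ((1:ℝ))⁻¹ (1 - 0) := by
    have := Real.hasDerivAt_log (by norm_num : (1:ℝ) - 0 ≠ 0)
    simpa using this
  have h3 : HasDerivAt (fun t : ℝ => Real.log (1 - t)) (-1) 0 := by
    have := h2.comp 0 h1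
    simpa [Function.comp_def] using this
  have := hasDerivAt_iff_tendsto_slope.mp h3
  refine this.congr ?_
  intro t
  simp [slope, Real.log_one, div_eq_inv_mul]

lemma nlogq_tendsto (hu : 0 < u) :
    Tendsto (fun n : ℕ => (n:ℝ) * Real.log (1 - pn n u)) atTop (𝓝 (-u)) := by
  have hp0 : Tendsto (fun n : ℕ => pn n u) atTop (𝓝[≠] (0:ℝ)) := by
    rw [tendsto_nhdsWithin_iff]
    refine ⟨p_tendsto hu.le, ?_⟩
    filter_upwards [ev_n hu.le] with n ⟨hn, h4⟩
    exact (pn_pos hu hn h4).ne'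
  have hcomp := slope_log.comp hp0
  have := (np_tendsto hu.le).mul hcomp
  rw [show u * (-1) = -u by ring] at this
  refine this.congr' ?_
  filter_upwards [ev_n hu.le] with n ⟨hn, h4⟩
  have hpne : pn n u ≠ 0 := (pn_pos hu hn h4).ne'
  simp only [Function.comp]
  field_simp
lemma qn_tendsto (hu : 0 < u) :
    Tendsto (fun n : ℕ => (1 - pn n u)^n) atTop (𝓝 (Real.exp (-u))) := by
  have := (Real.continuous_exp.tendsto (-u)).comp (nlogq_tendsto hu)
  refine this.congr' ?_
  filter_upwards [ev_n hu.le] with n ⟨hn, h4⟩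
  have hq : 0 < 1 - pn n u := by
    have := pn_le_half' (u := u) (n := n) hu.le; linarith
  simp only [Function.comp]
  rw [Real.exp_nat_mul, Real.exp_log hq]
end conv

section conv2
variable {u : ℝ}

lemma choose_pow_eq {n k : ℕ} (hkn : k ≤ n) (p : ℝ) :
    (n.choose k : ℝ) * p ^ k = (∏ i ∈ Finset.range k, (((n:ℝ) - i) * p)) / (k.factorial : ℝ) := by
  have hdesc : ((n.descFactorial k : ℕ) : ℝ) = ∏ i ∈ Finset.range k, ((n:ℝ) - i) := by
    rw [Nat.descFactorial_eq_prod_range, Nat.cast_prod]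
    refine Finset.prod_congr rfl fun i hi => ?_
    have : i ≤ n := le_trans (le_of_lt (Finset.mem_range.mp hi)) hkn
    rw [Nat.cast_sub this]
  have hfac : ((k.factorial : ℕ) : ℝ) * (n.choose k : ℝ) = (n.descFactorial k : ℝ) := by
    rw_mod_cast [Nat.descFactorial_eq_factorial_mul_choose]
  have hk0 : ((k.factorial : ℕ) : ℝ) ≠ 0 := by positivity
  rw [Finset.prod_mul_distrib, Finset.prod_const, ← hdesc, ← hfac]
  field_simp
  rw [Finset.card_range]

lemma A_tendsto (hu : 0 ≤ u) (k : ℕ) :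
    Tendsto (fun n : ℕ => (n.choose k : ℝ) * pn n u ^ k) atTop
      (𝓝 (u^k / (k.factorial : ℝ))) := by
  have hfact : ∀ i : ℕ, Tendsto (fun n : ℕ => ((n:ℝ) - i) * pn n u) atTop (𝓝 u) := by
    intro i
    have h1 := (np_tendsto hu).sub ((p_tendsto hu).const_mul (i:ℝ))
    rw [mul_zero, sub_zero] at h1
    refine h1.congr fun n => by ring
  have hprod : Tendsto (fun n : ℕ => ∏ i ∈ Finset.range k, (((n:ℝ) - i) * pn n u)) atTop
      (𝓝 (u^k)) := by
    have := tendsto_finset_prod (Finset.range k)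
      (fun i (_ : i ∈ Finset.range k) => hfact i)
    simpa [Finset.prod_const] using this
  have := hprod.div_const (k.factorial : ℝ)
  refine this.congr' ?_
  filter_upwards [eventually_ge_atTop k] with n hkn
  exact (choose_pow_eq hkn (pn n u)).symm

lemma B_tendsto (hu : 0 < u) (k : ℕ) :
    Tendsto (fun n : ℕ => (1 - pn n u) ^ (n - k)) atTop (𝓝 (Real.exp (-u))) := by
  have h1 : Tendsto (fun n : ℕ => ((1 - pn n u)^k)⁻¹) atTop (𝓝 1) := by
    have := ((q_tendsto hu.le).pow k).inv₀ (by norm_num)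
    simpa using this
  have h2 := (qn_tendsto hu).mul h1
  rw [mul_one] at h2
  refine h2.congr' ?_
  filter_upwards [eventually_ge_atTop k, ev_n hu.le] with n hkn ⟨hn, h4⟩
  have hq : (1 - pn n u) ≠ 0 := by
    have h2 := pn_le_half' (u := u) (n := n) hu.le
    intro h
    have : pn n u = 1 := by linarith
    linarith
  exact (pow_sub₀ _ hq hkn).symm

lemma fterm_tendsto (hu : 0 < u) (k : ℕ) :
    Tendsto (fun n : ℕ => fterm u n k) atTop
      (𝓝 ((u^k / (k.factorial : ℝ) * Real.exp (-u))^2)) := by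
  have := ((A_tendsto hu.le k).mul (B_tendsto hu k)).pow 2
  exact this.congr fun n => by rw [fterm]

lemma fterm_bound (hu : 0 ≤ u) : ∀ᶠ n : ℕ in atTop,
    ∀ k, |fterm u n k| ≤ ((2*u)^k / (k.factorial : ℝ))^2 := by
  filter_upwards [ev_n hu] with n ⟨hn, h4⟩
  intro k
  rcases le_or_gt k n with hk | hk
  · have hp0 : 0 ≤ pn n u := pn_nonneg' hu hn h4
    have hph : pn n u ≤ 1/2 := pn_le_half' hu
    have hq0 : (0:ℝ) ≤ 1 - pn n u := by linarith
    have hq1 : 1 - pn n u ≤ 1 := by linarith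
    have hbase : 0 ≤ (n.choose k : ℝ) * pn n u ^ k * (1 - pn n u) ^ (n - k) := by positivity
    rw [fterm, abs_of_nonneg (sq_nonneg _)]
    refine pow_le_pow_left₀ hbase ?_ 2
    have hcp : (n.choose k : ℝ) * pn n u ^ k ≤ (2*u)^k / (k.factorial : ℝ) := by
      have hfac : ((k.factorial : ℕ) : ℝ) * ((n.choose k : ℝ) * pn n u ^ k)
          = (n.descFactorial k : ℝ) * pn n u ^ k := by
        push_cast [Nat.descFactorial_eq_factorial_mul_choose]; ring
      have h2 : (n.descFactorial k : ℝ) ≤ (n:ℝ)^k := by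
        exact_mod_cast Nat.descFactorial_le_pow n k
      have h3 : (n.descFactorial k : ℝ) * pn n u ^ k ≤ ((n:ℝ) * pn n u)^k := by
        rw [mul_pow]
        exact mul_le_mul_of_nonneg_right h2 (by positivity)
      have h5 : ((n:ℝ) * pn n u)^k ≤ (2*u)^k :=
        pow_le_pow_left₀ (by positivity) (np_le hu hn h4) k
      have hkpos : (0:ℝ) < (k.factorial : ℕ) := by positivity
      rw [le_div_iff₀ hkpos]
      calc (n.choose k : ℝ) * pn n u ^ k * (k.factorial : ℕ)
          = ((k.factorial : ℕ) : ℝ) * ((n.choose k : ℝ) * pn n u ^ k) := by ring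
        _ = (n.descFactorial k : ℝ) * pn n u ^ k := hfac
        _ ≤ ((n:ℝ) * pn n u)^k := h3
        _ ≤ (2*u)^k := h5
    have hqpow : (1 - pn n u) ^ (n - k) ≤ 1 := pow_le_one₀ hq0 hq1
    calc (n.choose k : ℝ) * pn n u ^ k * (1 - pn n u) ^ (n - k)
        ≤ (n.choose k : ℝ) * pn n u ^ k * 1 :=
          mul_le_mul_of_nonneg_left hqpow (by positivity)
      _ = (n.choose k : ℝ) * pn n u ^ k := mul_one _
      _ ≤ (2*u)^k / (k.factorial : ℝ) := hcp
  · have h0 : n.choose k = 0 := Nat.choose_eq_zero_of_lt hk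
    rw [fterm, h0]
    simp only [Nat.cast_zero, zero_mul, ne_eq, OfNat.ofNat_ne_zero, not_false_eq_true,
      zero_pow, abs_zero]
    positivity

lemma bound_summable (hu : 0 ≤ u) :
    Summable (fun k : ℕ => ((2*u)^k / (k.factorial : ℝ))^2) := by
  refine Summable.of_nonneg_of_le (fun k => sq_nonneg _) (fun k => ?_)
    (Real.summable_pow_div_factorial (4*u^2))
  have h1 : ((2*u)^k / (k.factorial : ℝ))^2 = (4*u^2)^k / ((k.factorial : ℝ))^2 := by
    rw [div_pow, ← pow_mul, mul_comm k 2, pow_mul]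
    norm_num
    ring_nf
  rw [h1]
  have hk1 : (1:ℝ) ≤ (k.factorial : ℝ) := by exact_mod_cast Nat.one_le_iff_ne_zero.2 k.factorial_ne_zero
  have : ((k.factorial : ℝ)) ≤ ((k.factorial : ℝ))^2 := by nlinarith
  exact div_le_div_of_nonneg_left (by positivity) (by positivity) this

lemma phi_tendsto (hu : 0 ≤ u) :
    Tendsto (fun n : ℕ => phi n u) atTop (𝓝 (phiInf u)) := by
  rcases eq_or_lt_of_le hu with rfl | hu0
  · have hpn : ∀ n : ℕ, pn n (0:ℝ) = 0 := by
      intro n; simp [pn]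
    have hphi : ∀ n : ℕ, phi n (0:ℝ) = 1 := by
      intro n
      rw [phi]
      rw [Finset.sum_eq_single 0]
      · simp [hpn]
      · intro k hk hk0
        simp [hpn, zero_pow hk0]
      · intro h; simp at h
    have hphiInf : phiInf (0:ℝ) = 1 := by
      rw [phiInf]
      have : ∑' k : ℕ, ((0:ℝ) ^ k / (Nat.factorial k : ℝ)) ^ 2 = 1 := by
        rw [tsum_eq_single 0]
        · simp
        · intro k hk; simp [zero_pow hk]
      rw [this]; simp
    rw [hphiInf]
    exact tendsto_const_nhds.congr fun n => (hphi n).symm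
  · have hdom := tendsto_tsum_of_dominated_convergence (f := fterm u)
      (g := fun k => (u^k / (k.factorial : ℝ) * Real.exp (-u))^2)
      (bound := fun k => ((2*u)^k / (k.factorial : ℝ))^2)
      (bound_summable hu) (fterm_tendsto hu0)
      (by filter_upwards [fterm_bound hu] with n h k
          simpa [Real.norm_eq_abs] using h k)
    have hsum : ∑' k : ℕ, (u^k / (k.factorial : ℝ) * Real.exp (-u))^2 = phiInf u := by
      have h1 : ∀ k : ℕ, (u^k / (k.factorial : ℝ) * Real.exp (-u))^2
          = Real.exp (-2*u) * (u^k / (k.factorial : ℝ))^2 := by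
        intro k
        have : Real.exp (-u) ^ 2 = Real.exp (-2*u) := by
          rw [← Real.exp_nat_mul]
          congr 1
          push_cast
          ring
        rw [mul_pow, this]; ring
      rw [tsum_congr h1, tsum_mul_left, phiInf]
    rw [hsum] at hdom
    exact hdom.congr fun n => (phi_eq_tsum u n).symm
end conv2


theorem phi_le_and_tendsto_phiInf (u : ℝ) (hu : 0 ≤ u) :
    (∀ n : ℕ, 0 < n → 4 * u ≤ (n : ℝ) → phi n u ≤ phiInf u) ∧
    Filter.Tendsto (fun n : ℕ => phi n u) Filter.atTop (nhds (phiInf u)) := by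
  refine ⟨?_, phi_tendsto hu⟩
  intro n hn h4
  refine ge_of_tendsto (phi_tendsto hu) ?_
  filter_upwards [eventually_ge_atTop n] with m hm
  exact phi_mono hu hn h4 hm
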